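/- There is a bijection between domino tilings of the 2n-by-2n square and domino tilings of the Aztec diamond of order 2n in which the n(n−1)/2 dominos in each of the four corners are placed in the unique forced positions (slanting SW–NE in the NW and SE corners, and NW–SE in the SW and NE corners). -/

import Mathlib

/-- Two lattice cells are adjacent if they differ by one step horizontally or
vertically. -/
def cellAdj (a b : ℤ × ℤ) : Prop :=
  (a.1 = b.1 ∧ (a.2 = b.2 + 1 ∨ b.2 = a.2 + 1)) ∨
  (a.2 = b.2 ∧ (a.1 = b.1 + 1 ∨ b.1 = a.1 + 1))

instance (a b : ℤ × ℤ) : Decidable (cellAdj a b) := by unfold cellAdj; infer_instance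

/-- The domino tilings of a finite set `S` of cells, encoded as the perfect matchings
of its adjacency graph: fixed-point-free adjacency-respecting involutions of `S`. -/
def tilings (S : Finset (ℤ × ℤ)) : Finset ({x // x ∈ S} → {x // x ∈ S}) :=
  Finset.univ.filter fun f => ∀ v, f (f v) = v ∧ f v ≠ v ∧ cellAdj v.val (f v).val

/-- The cells of the Aztec diamond of order `2n`: `(i,j)` with `1 ≤ i,j ≤ 4n` and
`|2i−4n−1| + |2j−4n−1| ≤ 4n`. -/
noncomputable def adCells (n : ℕ) : Finset (ℤ × ℤ) :=
  (Finset.Icc ((1 : ℤ), (1 : ℤ)) (4 * (n : ℤ), 4 * (n : ℤ))).filter fun p =>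
    |2 * p.1 - (4 * (n : ℤ) + 1)| + |2 * p.2 - (4 * (n : ℤ) + 1)| ≤ 4 * n

/-- The cells of the central `2n×2n` square inside the Aztec diamond of order `2n`. -/
noncomputable def squareCells (n : ℕ) : Finset (ℤ × ℤ) :=
  Finset.Icc ((n : ℤ) + 1, (n : ℤ) + 1) (3 * (n : ℤ), 3 * (n : ℤ))

/-- For a cell of the Aztec diamond of order `2n` lying outside the central `2n×2n`
square, the partner cell of the unique forced domino covering it (the forced dominoes
run along the staircase corner regions, slanting SW–NE in the NW and SE corners and
NW–SE in the SW and NE corners). -/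
def forcedPartner (n : ℕ) (p : ℤ × ℤ) : ℤ × ℤ :=
  if p.1 ≤ n then
    (if Odd (p.1 + p.2) then (p.1, p.2 + 1) else (p.1, p.2 - 1))
  else if 3 * n + 1 ≤ p.1 then
    (if Even (p.1 + p.2) then (p.1, p.2 + 1) else (p.1, p.2 - 1))
  else if p.2 ≤ n then
    (if Odd (p.1 + p.2) then (p.1 + 1, p.2) else (p.1 - 1, p.2))
  else
    (if Even (p.1 + p.2) then (p.1 + 1, p.2) else (p.1 - 1, p.2))

/-! ### Auxiliary lemmas -/

lemma mem_adCells {n : ℕ} {p : ℤ × ℤ} :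
    p ∈ adCells n ↔ 1 ≤ p.1 ∧ 1 ≤ p.2 ∧ p.1 ≤ 4 * n ∧ p.2 ≤ 4 * n ∧
      ((2 * p.1 - (4 * (n : ℤ) + 1)).natAbs : ℤ) +
      ((2 * p.2 - (4 * (n : ℤ) + 1)).natAbs : ℤ) ≤ 4 * n := by
  rw [adCells, Finset.mem_filter, Finset.mem_Icc, Prod.le_def, Prod.le_def,
      Int.abs_eq_natAbs, Int.abs_eq_natAbs]
  constructor
  · rintro ⟨⟨⟨h1, h2⟩, h3, h4⟩, h5⟩; exact ⟨h1, h2, h3, h4, h5⟩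
  · rintro ⟨h1, h2, h3, h4, h5⟩; exact ⟨⟨⟨h1, h2⟩, h3, h4⟩, h5⟩

lemma mem_squareCells {n : ℕ} {p : ℤ × ℤ} :
    p ∈ squareCells n ↔ (n : ℤ) + 1 ≤ p.1 ∧ (n : ℤ) + 1 ≤ p.2 ∧
      p.1 ≤ 3 * n ∧ p.2 ≤ 3 * n := by
  rw [squareCells, Finset.mem_Icc, Prod.le_def, Prod.le_def]
  constructor
  · rintro ⟨⟨h1, h2⟩, h3, h4⟩; exact ⟨h1, h2, h3, h4⟩
  · rintro ⟨h1, h2, h3, h4⟩; exact ⟨⟨h1, h2⟩, h3, h4⟩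

lemma mem_adCells' {n : ℕ} {a b : ℤ} :
    (a, b) ∈ adCells n ↔ 1 ≤ a ∧ 1 ≤ b ∧ a ≤ 4 * n ∧ b ≤ 4 * n ∧
      ((2 * a - (4 * (n : ℤ) + 1)).natAbs : ℤ) +
      ((2 * b - (4 * (n : ℤ) + 1)).natAbs : ℤ) ≤ 4 * n := mem_adCells

lemma mem_squareCells' {n : ℕ} {a b : ℤ} :
    (a, b) ∈ squareCells n ↔ (n : ℤ) + 1 ≤ a ∧ (n : ℤ) + 1 ≤ b ∧
      a ≤ 3 * n ∧ b ≤ 3 * n := mem_squareCells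

lemma fp_pair (n : ℕ) (a b : ℤ) :
    forcedPartner n (a, b) =
      if a ≤ n then
        (if (a + b) % 2 = 1 then (a, b + 1) else (a, b - 1))
      else if 3 * n + 1 ≤ a then
        (if (a + b) % 2 = 0 then (a, b + 1) else (a, b - 1))
      else if b ≤ n then
        (if (a + b) % 2 = 1 then (a + 1, b) else (a - 1, b))
      else
        (if (a + b) % 2 = 0 then (a + 1, b) else (a - 1, b)) := by
  simp only [forcedPartner, Int.odd_iff, Int.even_iff]

lemma square_subset_adCells {n : ℕ} : squareCells n ⊆ adCells n := by
  intro p hp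
  rw [mem_squareCells] at hp
  rw [mem_adCells]
  omega

lemma forcedPartner_mem {n : ℕ} {p : ℤ × ℤ} (hp : p ∈ adCells n)
    (hs : p ∉ squareCells n) : forcedPartner n p ∈ adCells n := by
  obtain ⟨a, b⟩ := p
  rw [mem_adCells'] at hp
  rw [mem_squareCells'] at hs
  rw [fp_pair]
  split_ifs <;> rw [mem_adCells'] <;> omega

lemma forcedPartner_not_mem_square {n : ℕ} {p : ℤ × ℤ}
    (hs : p ∉ squareCells n) : forcedPartner n p ∉ squareCells n := by
  obtain ⟨a, b⟩ := p
  rw [mem_squareCells'] at hs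
  rw [fp_pair]
  split_ifs <;> rw [mem_squareCells'] <;> omega

lemma forcedPartner_involutive {n : ℕ} {p : ℤ × ℤ} (hp : p ∈ adCells n)
    (hs : p ∉ squareCells n) : forcedPartner n (forcedPartner n p) = p := by
  obtain ⟨a, b⟩ := p
  rw [mem_adCells'] at hp
  rw [mem_squareCells'] at hs
  have h2 := fp_pair n a b
  by_cases h1 : a ≤ (n : ℤ)
  · by_cases hp2 : (a + b) % 2 = 1
    · have e1 : ¬((a + (b + 1)) % 2 = 1) := by omega
      rw [h2, if_pos h1, if_pos hp2, fp_pair, if_pos h1, if_neg e1]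
      simp only [Prod.mk.injEq, true_and, and_true]; omega
    · have e1 : (a + (b - 1)) % 2 = 1 := by omega
      rw [h2, if_pos h1, if_neg hp2, fp_pair, if_pos h1, if_pos e1]
      simp only [Prod.mk.injEq, true_and, and_true]; omega
  · by_cases h3 : 3 * (n : ℤ) + 1 ≤ a
    · by_cases hp2 : (a + b) % 2 = 0
      · have e1 : ¬((a + (b + 1)) % 2 = 0) := by omega
        rw [h2, if_neg h1, if_pos h3, if_pos hp2, fp_pair, if_neg h1, if_pos h3, if_neg e1]
        simp only [Prod.mk.injEq, true_and, and_true]; omega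
      · have e1 : (a + (b - 1)) % 2 = 0 := by omega
        rw [h2, if_neg h1, if_pos h3, if_neg hp2, fp_pair, if_neg h1, if_pos h3, if_pos e1]
        simp only [Prod.mk.injEq, true_and, and_true]; omega
    · by_cases h4 : b ≤ (n : ℤ)
      · by_cases hp2 : (a + b) % 2 = 1
        · have e1 : ¬(a + 1 ≤ (n : ℤ)) := by omega
          have e2 : ¬(3 * (n : ℤ) + 1 ≤ a + 1) := by omega
          have e3 : ¬((a + 1 + b) % 2 = 1) := by omega
          rw [h2, if_neg h1, if_neg h3, if_pos h4, if_pos hp2, fp_pair,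
              if_neg e1, if_neg e2, if_pos h4, if_neg e3]
          simp only [Prod.mk.injEq, true_and, and_true]; omega
        · have e1 : ¬(a - 1 ≤ (n : ℤ)) := by omega
          have e2 : ¬(3 * (n : ℤ) + 1 ≤ a - 1) := by omega
          have e3 : (a - 1 + b) % 2 = 1 := by omega
          rw [h2, if_neg h1, if_neg h3, if_pos h4, if_neg hp2, fp_pair,
              if_neg e1, if_neg e2, if_pos h4, if_pos e3]
          simp only [Prod.mk.injEq, true_and, and_true]; omega
      · by_cases hp2 : (a + b) % 2 = 0
        · have e1 : ¬(a + 1 ≤ (n : ℤ)) := by omega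
          have e2 : ¬(3 * (n : ℤ) + 1 ≤ a + 1) := by omega
          have e3 : ¬((a + 1 + b) % 2 = 0) := by omega
          rw [h2, if_neg h1, if_neg h3, if_neg h4, if_pos hp2, fp_pair,
              if_neg e1, if_neg e2, if_neg h4, if_neg e3]
          simp only [Prod.mk.injEq, true_and, and_true]; omega
        · have e1 : ¬(a - 1 ≤ (n : ℤ)) := by omega
          have e2 : ¬(3 * (n : ℤ) + 1 ≤ a - 1) := by omega
          have e3 : (a - 1 + b) % 2 = 0 := by omega
          rw [h2, if_neg h1, if_neg h3, if_neg h4, if_neg hp2, fp_pair,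
              if_neg e1, if_neg e2, if_neg h4, if_pos e3]
          simp only [Prod.mk.injEq, true_and, and_true]; omega

lemma forcedPartner_adj {n : ℕ} {p : ℤ × ℤ} : cellAdj p (forcedPartner n p) := by
  obtain ⟨a, b⟩ := p
  rw [fp_pair]
  unfold cellAdj
  split_ifs <;> simp

lemma forcedPartner_ne {n : ℕ} {p : ℤ × ℤ} : forcedPartner n p ≠ p := by
  obtain ⟨a, b⟩ := p
  rw [fp_pair]
  split_ifs <;> simp only [ne_eq, Prod.mk.injEq] <;> omega

lemma mem_tilings {S : Finset (ℤ × ℤ)} {f : {x // x ∈ S} → {x // x ∈ S}} :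
    f ∈ tilings S ↔ ∀ v, f (f v) = v ∧ f v ≠ v ∧ cellAdj v.val (f v).val := by
  rw [tilings, Finset.mem_filter]
  simp

/-- Extension of a square tiling to the Aztec diamond by forced dominoes. -/
noncomputable def extendF (n : ℕ) (f : {x // x ∈ squareCells n} → {x // x ∈ squareCells n})
    (v : {x // x ∈ adCells n}) : {x // x ∈ adCells n} :=
  if h : v.val ∈ squareCells n then
    ⟨(f ⟨v.val, h⟩).val, square_subset_adCells (f ⟨v.val, h⟩).2⟩
  else ⟨forcedPartner n v.val, forcedPartner_mem v.2 h⟩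

/-- Restriction of a forced Aztec tiling to the central square. -/
noncomputable def restrictF (n : ℕ) (g : {x // x ∈ adCells n} → {x // x ∈ adCells n})
    (v : {x // x ∈ squareCells n}) : {x // x ∈ squareCells n} :=
  if h : (g ⟨v.val, square_subset_adCells v.2⟩).val ∈ squareCells n then
    ⟨(g ⟨v.val, square_subset_adCells v.2⟩).val, h⟩
  else v

lemma extendF_mem (n : ℕ) (f : {x // x ∈ squareCells n} → {x // x ∈ squareCells n})
    (hf : f ∈ tilings (squareCells n)) :
    extendF n f ∈ (tilings (adCells n)).filter fun g =>
      ∀ v, v.val ∉ squareCells n → (g v).val = forcedPartner n v.val := by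
  rw [mem_tilings] at hf
  rw [Finset.mem_filter]
  constructor
  · rw [mem_tilings]
    intro v
    by_cases h : v.val ∈ squareCells n
    · obtain ⟨hi, hne, hadj⟩ := hf ⟨v.val, h⟩
      have e1 : extendF n f v =
          ⟨(f ⟨v.val, h⟩).val, square_subset_adCells (f ⟨v.val, h⟩).2⟩ := dif_pos h
      have e2 : extendF n f ⟨(f ⟨v.val, h⟩).val, square_subset_adCells (f ⟨v.val, h⟩).2⟩ =
          ⟨(f (f ⟨v.val, h⟩)).val, square_subset_adCells (f (f ⟨v.val, h⟩)).2⟩ := by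
        rw [extendF, dif_pos (f ⟨v.val, h⟩).2]
      refine ⟨?_, ?_, ?_⟩
      · rw [e1, e2]
        apply Subtype.ext
        rw [hi]
      · rw [e1]
        intro hc
        exact hne (Subtype.ext (show (f ⟨v.val, h⟩).val = v.val from
          congrArg Subtype.val hc))
      · rw [e1]
        exact hadj
    · have e1 : extendF n f v = ⟨forcedPartner n v.val, forcedPartner_mem v.2 h⟩ :=
        dif_neg h
      have h2 : forcedPartner n v.val ∉ squareCells n := forcedPartner_not_mem_square h
      have e2 : extendF n f ⟨forcedPartner n v.val, forcedPartner_mem v.2 h⟩ =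
          ⟨forcedPartner n (forcedPartner n v.val), _⟩ := dif_neg h2
      refine ⟨?_, ?_, ?_⟩
      · rw [e1, e2]
        apply Subtype.ext
        exact forcedPartner_involutive v.2 h
      · rw [e1]
        intro hc
        exact forcedPartner_ne (congrArg Subtype.val hc)
      · rw [e1]
        exact forcedPartner_adj
  · intro v hv
    rw [extendF, dif_neg hv]

lemma restrict_key (n : ℕ) (g : {x // x ∈ adCells n} → {x // x ∈ adCells n})
    (hg : g ∈ (tilings (adCells n)).filter fun g =>
      ∀ v, v.val ∉ squareCells n → (g v).val = forcedPartner n v.val)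
    (v : {x // x ∈ squareCells n}) :
    (g ⟨v.val, square_subset_adCells v.2⟩).val ∈ squareCells n := by
  rw [Finset.mem_filter, mem_tilings] at hg
  by_contra h
  have h2 := hg.2 (g ⟨v.val, square_subset_adCells v.2⟩) h
  rw [(hg.1 _).1] at h2
  exact forcedPartner_not_mem_square h (h2 ▸ v.2)

lemma restrictF_mem (n : ℕ) (g : {x // x ∈ adCells n} → {x // x ∈ adCells n})
    (hg : g ∈ (tilings (adCells n)).filter fun g =>
      ∀ v, v.val ∉ squareCells n → (g v).val = forcedPartner n v.val) :
    restrictF n g ∈ tilings (squareCells n) := by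
  have key := restrict_key n g hg
  rw [Finset.mem_filter, mem_tilings] at hg
  rw [mem_tilings]
  intro v
  have e1 : restrictF n g v = ⟨(g ⟨v.val, square_subset_adCells v.2⟩).val, key v⟩ :=
    dif_pos (key v)
  refine ⟨?_, ?_, ?_⟩
  · apply Subtype.ext
    rw [e1]
    show (restrictF n g ⟨(g ⟨v.val, square_subset_adCells v.2⟩).val, key v⟩).val = v.val
    rw [restrictF,
      dif_pos (key ⟨(g ⟨v.val, square_subset_adCells v.2⟩).val, key v⟩)]
    show (g (g ⟨v.val, square_subset_adCells v.2⟩)).val = v.val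
    rw [(hg.1 ⟨v.val, square_subset_adCells v.2⟩).1]
  · rw [e1]
    intro hc
    exact (hg.1 ⟨v.val, square_subset_adCells v.2⟩).2.1
      (Subtype.ext (show (g ⟨v.val, square_subset_adCells v.2⟩).val = v.val from
        congrArg Subtype.val hc))
  · rw [e1]
    exact (hg.1 ⟨v.val, square_subset_adCells v.2⟩).2.2

lemma left_inv_lemma (n : ℕ) (f : {x // x ∈ squareCells n} → {x // x ∈ squareCells n})
    (hf : f ∈ tilings (squareCells n)) : restrictF n (extendF n f) = f := by
  funext v
  apply Subtype.ext
  have key := restrict_key n (extendF n f) (extendF_mem n f hf)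
  show (restrictF n (extendF n f) v).val = (f v).val
  rw [restrictF, dif_pos (key v)]
  show (extendF n f ⟨v.val, square_subset_adCells v.2⟩).val = (f v).val
  rw [extendF, dif_pos v.2]

lemma right_inv_lemma (n : ℕ) (g : {x // x ∈ adCells n} → {x // x ∈ adCells n})
    (hg : g ∈ (tilings (adCells n)).filter fun g =>
      ∀ v, v.val ∉ squareCells n → (g v).val = forcedPartner n v.val) :
    extendF n (restrictF n g) = g := by
  have key := restrict_key n g hg
  funext v
  apply Subtype.ext
  show (extendF n (restrictF n g) v).val = (g v).val
  by_cases h : v.val ∈ squareCells n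
  · rw [extendF, dif_pos h]
    show (restrictF n g ⟨v.val, h⟩).val = (g v).val
    rw [restrictF, dif_pos (key ⟨v.val, h⟩)]
  · rw [extendF, dif_neg h]
    rw [Finset.mem_filter] at hg
    exact (hg.2 v h).symm

set_option maxHeartbeats 2000000 in
/-- There is a bijection between domino tilings of the `2n×2n` square and domino
tilings of the Aztec diamond of order `2n` in which every cell outside the central
square is covered by its unique forced domino. -/
theorem square_tilings_equiv_forced_aztec_tilings (n : ℕ) (hn : 1 ≤ n) :
    Nonempty
      ({f // f ∈ tilings (squareCells n)} ≃
       {f // f ∈ (tilings (adCells n)).filter fun f =>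
          ∀ v, v.val ∉ squareCells n → (f v).val = forcedPartner n v.val}) := by
  exact ⟨⟨fun f => ⟨extendF n f.val, extendF_mem n f.val f.2⟩,
          fun g => ⟨restrictF n g.val, restrictF_mem n g.val g.2⟩,
          fun f => Subtype.ext (left_inv_lemma n f.val f.2),
          fun g => Subtype.ext (right_inv_lemma n g.val g.2)⟩⟩
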